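/- For every positive integer n, the sum over all pairs of positive integers (i,j) with i + j = n + 1 of (1/(i·j)) · C(2i+j-2, j-1) · C(2j+i-2, i-1) equals (2/((n+1)(2n+1))) · C(3n, n). -/

import Mathlib

/-- The summand: number of fighting fish with `i` left and `n+1-i` right lower free edges. -/
private def fishT (n i : ℕ) : ℚ :=
  (1 / ((i : ℚ) * ((n + 1 - i : ℕ) : ℚ))) *
    (Nat.choose (2*i + (n + 1 - i) - 2) ((n + 1 - i) - 1) : ℚ) *
    (Nat.choose (2*(n + 1 - i) + i - 2) (i - 1) : ℚ)

private def fishS (n : ℕ) : ℚ := ∑ i ∈ Finset.Icc 1 n, fishT n i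

private def fishR (n : ℕ) : ℚ :=
  (2 / (((n : ℚ) + 1) * (2*(n : ℚ) + 1))) * (Nat.choose (3*n) n : ℚ)

/-- WZ-style certificate function. -/
private def fishG (n i : ℕ) : ℚ :=
  -(23*(n:ℚ)^3 - 35*(n:ℚ)^2*(i:ℚ) + 83*(n:ℚ)^2 + 14*(n:ℚ)*(i:ℚ)^2 - 79*(n:ℚ)*(i:ℚ)
      + 96*(n:ℚ) + 12*(i:ℚ)^2 - 42*(i:ℚ) + 36) *
    (Nat.choose (n+i-1) (n+2-i) : ℚ) * (Nat.choose (2*n+1-i) (i-1) : ℚ) /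
    ((n:ℚ) * ((n:ℚ)+1) * (2*(n:ℚ)+3 - 2*(i:ℚ)))

private lemma fishT_eval (l m : ℕ) :
    fishT (l+1+m) (l+1)
      = 1 / (((l:ℚ)+1) * ((m:ℚ)+1)) * (Nat.choose (2*l+m+1) m : ℚ)
          * (Nat.choose (l+2*m+1) l : ℚ) := by
  unfold fishT
  rw [show l+1+m+1-(l+1) = m+1 from by omega]
  rw [show 2*(l+1)+(m+1)-2 = 2*l+m+1 from by omega, show m+1-1 = m from by omega,
    show 2*(m+1)+(l+1)-2 = l+2*m+1 from by omega, show l+1-1 = l from by omega]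
  push_cast
  ring

private lemma fishT_eval2 (l m : ℕ) :
    fishT (l+1+m+1) (l+1)
      = 1 / (((l:ℚ)+1) * ((m:ℚ)+2)) * (Nat.choose (2*l+m+2) (m+1) : ℚ)
          * (Nat.choose (l+2*m+3) l : ℚ) := by
  unfold fishT
  rw [show l+1+m+1+1-(l+1) = m+2 from by omega]
  rw [show 2*(l+1)+(m+2)-2 = 2*l+m+2 from by omega, show m+2-1 = m+1 from by omega,
    show 2*(m+2)+(l+1)-2 = l+2*m+3 from by omega, show l+1-1 = l from by omega]
  push_cast
  ring

private lemma fishG_eval (l m : ℕ) :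
    fishG (l+1+m) (l+1)
      = -(23*((l:ℚ)+1+m)^3 - 35*((l:ℚ)+1+m)^2*((l:ℚ)+1) + 83*((l:ℚ)+1+m)^2
            + 14*((l:ℚ)+1+m)*((l:ℚ)+1)^2 - 79*((l:ℚ)+1+m)*((l:ℚ)+1)
            + 96*((l:ℚ)+1+m) + 12*((l:ℚ)+1)^2 - 42*((l:ℚ)+1) + 36) *
          (Nat.choose (2*l+m+1) (m+2) : ℚ) * (Nat.choose (l+2*m+2) l : ℚ) /
          (((l:ℚ)+1+m) * (((l:ℚ)+1+m)+1) * (2*(m:ℚ)+3)) := by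
  unfold fishG
  rw [show l+1+m+(l+1)-1 = 2*l+m+1 from by omega, show l+1+m+2-(l+1) = m+2 from by omega,
    show 2*(l+1+m)+1-(l+1) = l+2*m+2 from by omega, show l+1-1 = l from by omega]
  push_cast
  ring

private lemma fishG_eval_succ (l m : ℕ) :
    fishG (l+1+m) (l+1+1)
      = -(23*((l:ℚ)+1+m)^3 - 35*((l:ℚ)+1+m)^2*((l:ℚ)+2) + 83*((l:ℚ)+1+m)^2
            + 14*((l:ℚ)+1+m)*((l:ℚ)+2)^2 - 79*((l:ℚ)+1+m)*((l:ℚ)+2)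
            + 96*((l:ℚ)+1+m) + 12*((l:ℚ)+2)^2 - 42*((l:ℚ)+2) + 36) *
          (Nat.choose (2*l+m+2) (m+1) : ℚ) * (Nat.choose (l+2*m+1) (l+1) : ℚ) /
          (((l:ℚ)+1+m) * (((l:ℚ)+1+m)+1) * (2*(m:ℚ)+1)) := by
  unfold fishG
  rw [show l+1+m+(l+1+1)-1 = 2*l+m+2 from by omega, show l+1+m+2-(l+1+1) = m+1 from by omega,
    show 2*(l+1+m)+1-(l+1+1) = l+2*m+1 from by omega, show l+1+1-1 = l+1 from by omega]
  push_cast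
  ring

private lemma fishT_top (n : ℕ) : fishT n (n+1) = 0 := by
  unfold fishT
  rw [show n+1-(n+1) = 0 from by omega]
  norm_num

private lemma fishT_top2 (n : ℕ) : fishT (n+1) (n+1) = 1 := by
  unfold fishT
  rw [show n+1+1-(n+1) = 1 from by omega]
  rw [show 2*(n+1)+1-2 = 2*n+1 from by omega, show (1:ℕ)-1 = 0 from rfl,
    show 2*1+(n+1)-2 = n+1 from by omega, show n+1-1 = n from by omega]
  rw [Nat.choose_zero_right, Nat.choose_succ_self_right]
  have h : ((n:ℚ)+1) ≠ 0 := by positivity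
  push_cast
  field_simp

private lemma fishG_one (n : ℕ) (hn : 1 ≤ n) : fishG n 1 = 0 := by
  unfold fishG
  rw [show n+1-1 = n from by omega, show n+2-1 = n+1 from by omega]
  rw [Nat.choose_eq_zero_of_lt (by omega)]
  norm_num

private lemma fishG_top (n : ℕ) (hn : 1 ≤ n) : fishG n (n+2) = 0 := by
  unfold fishG
  rw [show 2*n+1-(n+2) = n-1 from by omega, show n+2-1 = n+1 from by omega]
  rw [Nat.choose_eq_zero_of_lt (show n-1 < n+1 by omega)]
  norm_num

/-- The key telescoping identity. -/
private lemma fish_key (n i : ℕ) (h1 : 1 ≤ i) (h2 : i ≤ n + 1) (hn : 1 ≤ n) :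
    2*((n:ℚ)+2)*(2*(n:ℚ)+3) * fishT (n+1) i - 3*(3*(n:ℚ)+1)*(3*(n:ℚ)+2) * fishT n i
      = fishG n (i+1) - fishG n i := by
  by_cases hi : i ≤ n
  · -- generic case
    obtain ⟨l, rfl⟩ : ∃ l, i = l+1 := ⟨i-1, by omega⟩
    obtain ⟨m, rfl⟩ : ∃ m, n = l+1+m := ⟨n-(l+1), by omega⟩
    rw [fishT_eval, fishT_eval2, fishG_eval, fishG_eval_succ]
    -- binomial relations
    have ha1n : (2*l+m+2) * Nat.choose (2*l+m+1) m = Nat.choose (2*l+m+2) (m+1) * (m+1) := by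
      have h := Nat.add_one_mul_choose_eq (2*l+m+1) m
      simpa [Nat.succ_eq_add_one, show 2*l+m+1+1 = 2*l+m+2 from by omega] using h
    have ha2an : Nat.choose (2*l+m+1) (m+1) * (m+1) = Nat.choose (2*l+m+1) m * (2*l+1) := by
      have h := Nat.choose_succ_right_eq (2*l+m+1) m
      simpa [show 2*l+m+1-m = 2*l+1 from by omega] using h
    have ha2n : Nat.choose (2*l+m+1) (m+2) * (m+2) = Nat.choose (2*l+m+1) (m+1) * (2*l) := by
      have h := Nat.choose_succ_right_eq (2*l+m+1) (m+1)
      simpa [show m+1+1 = m+2 from by omega, show 2*l+m+1-(m+1) = 2*l from by omega] using h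
    have hb2n : Nat.choose (l+2*m+1) l * (l+2*m+2) = Nat.choose (l+2*m+2) l * (2*m+2) := by
      have h := Nat.choose_mul_succ_eq (l+2*m+1) l
      simpa [show l+2*m+1+1 = l+2*m+2 from by omega, show l+2*m+2-l = 2*m+2 from by omega] using h
    have hb1n : Nat.choose (l+2*m+2) l * (l+2*m+3) = Nat.choose (l+2*m+3) l * (2*m+3) := by
      have h := Nat.choose_mul_succ_eq (l+2*m+2) l
      simpa [show l+2*m+2+1 = l+2*m+3 from by omega, show l+2*m+3-l = 2*m+3 from by omega] using h
    have hb3n : Nat.choose (l+2*m+1) (l+1) * (l+1) = Nat.choose (l+2*m+1) l * (2*m+1) := by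
      have h := Nat.choose_succ_right_eq (l+2*m+1) l
      simpa [show l+2*m+1-l = 2*m+1 from by omega] using h
    -- cast to ℚ
    have ha1 : (2*((l:ℚ))+((m:ℚ))+2) * (Nat.choose (2*l+m+1) m : ℚ)
        = (Nat.choose (2*l+m+2) (m+1) : ℚ) * (((m:ℚ))+1) := by exact_mod_cast ha1n
    have ha2a : (Nat.choose (2*l+m+1) (m+1) : ℚ) * (((m:ℚ))+1)
        = (Nat.choose (2*l+m+1) m : ℚ) * (2*((l:ℚ))+1) := by exact_mod_cast ha2an
    have ha2 : (Nat.choose (2*l+m+1) (m+2) : ℚ) * (((m:ℚ))+2)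
        = (Nat.choose (2*l+m+1) (m+1) : ℚ) * (2*((l:ℚ))) := by exact_mod_cast ha2n
    have hb2 : (Nat.choose (l+2*m+1) l : ℚ) * (((l:ℚ))+2*((m:ℚ))+2)
        = (Nat.choose (l+2*m+2) l : ℚ) * (2*((m:ℚ))+2) := by exact_mod_cast hb2n
    have hb1 : (Nat.choose (l+2*m+2) l : ℚ) * (((l:ℚ))+2*((m:ℚ))+3)
        = (Nat.choose (l+2*m+3) l : ℚ) * (2*((m:ℚ))+3) := by exact_mod_cast hb1n
    have hb3 : (Nat.choose (l+2*m+1) (l+1) : ℚ) * (((l:ℚ))+1)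
        = (Nat.choose (l+2*m+1) l : ℚ) * (2*((m:ℚ))+1) := by exact_mod_cast hb3n
    -- solved forms
    have hM1 : (((m:ℚ))+1) ≠ 0 := by positivity
    have hM2 : (((m:ℚ))+2) ≠ 0 := by positivity
    have h2M1 : (2*((m:ℚ))+1) ≠ 0 := by positivity
    have h2M2 : (2*((m:ℚ))+2) ≠ 0 := by positivity
    have h2M3 : (2*((m:ℚ))+3) ≠ 0 := by positivity
    have hL1 : (((l:ℚ))+1) ≠ 0 := by positivity
    have hLM1 : (((l:ℚ))+1+((m:ℚ))) ≠ 0 := by positivity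
    have hLM2 : (((l:ℚ))+1+((m:ℚ))+1) ≠ 0 := by positivity
    have ea1 : (Nat.choose (2*l+m+2) (m+1) : ℚ) = (2*((l:ℚ))+((m:ℚ))+2) * (Nat.choose (2*l+m+1) m : ℚ) / (((m:ℚ))+1) := by
      rw [eq_div_iff hM1]; linear_combination -ha1
    have ea2 : (Nat.choose (2*l+m+1) (m+2) : ℚ) = (2*((l:ℚ)))*(2*((l:ℚ))+1) * (Nat.choose (2*l+m+1) m : ℚ) / ((((m:ℚ))+1)*(((m:ℚ))+2)) := by
      rw [eq_div_iff (by positivity)]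
      linear_combination (((m:ℚ))+1)*ha2 + (2*((l:ℚ)))*ha2a
    have eb2 : (Nat.choose (l+2*m+2) l : ℚ) = (((l:ℚ))+2*((m:ℚ))+2) * (Nat.choose (l+2*m+1) l : ℚ) / (2*((m:ℚ))+2) := by
      rw [eq_div_iff h2M2]; linear_combination -hb2
    have eb1 : (Nat.choose (l+2*m+3) l : ℚ)
        = (((l:ℚ))+2*((m:ℚ))+2)*(((l:ℚ))+2*((m:ℚ))+3) * (Nat.choose (l+2*m+1) l : ℚ) / ((2*((m:ℚ))+2)*(2*((m:ℚ))+3)) := by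
      rw [eq_div_iff (by positivity)]
      linear_combination -(2*((m:ℚ))+2)*hb1 - (((l:ℚ))+2*((m:ℚ))+3)*hb2
    have eb3 : (Nat.choose (l+2*m+1) (l+1) : ℚ) = (2*((m:ℚ))+1) * (Nat.choose (l+2*m+1) l : ℚ) / (((l:ℚ))+1) := by
      rw [eq_div_iff hL1]; linear_combination hb3
    rw [ea1, ea2, eb1, eb2, eb3]
    push_cast
    field_simp
    ring
  · -- boundary case i = n+1
    have : i = n+1 := by omega
    subst this
    rw [fishT_top, fishT_top2, fishG_top n hn]
    unfold fishG
    rw [show n+(n+1)-1 = 2*n from by omega, show n+2-(n+1) = 1 from by omega,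
      show 2*n+1-(n+1) = n from by omega, show n+1-1 = n from by omega]
    rw [Nat.choose_one_right, Nat.choose_self]
    have h0 : (n:ℚ) ≠ 0 := by
      exact_mod_cast Nat.pos_iff_ne_zero.mp hn
    have h1 : ((n:ℚ)+1) ≠ 0 := by positivity
    push_cast
    have hden : ((n:ℚ) * ((n:ℚ)+1) * (2*(n:ℚ)+3 - 2*((n:ℚ)+1))) = (n:ℚ) * ((n:ℚ)+1) := by ring
    rw [hden]
    field_simp
    ring

private lemma sum_step (n : ℕ) (hn : 1 ≤ n) :
    2*((n:ℚ)+2)*(2*(n:ℚ)+3) * fishS (n+1) = 3*(3*(n:ℚ)+1)*(3*(n:ℚ)+2) * fishS n := by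
  have hsum : ∑ i ∈ Finset.Icc 1 (n+1),
      (2*((n:ℚ)+2)*(2*(n:ℚ)+3) * fishT (n+1) i - 3*(3*(n:ℚ)+1)*(3*(n:ℚ)+2) * fishT n i)
      = ∑ i ∈ Finset.Icc 1 (n+1), (fishG n (i+1) - fishG n i) := by
    refine Finset.sum_congr rfl fun i hi => ?_
    rw [Finset.mem_Icc] at hi
    exact fish_key n i hi.1 hi.2 hn
  have htel : ∑ i ∈ Finset.Icc 1 (n+1), (fishG n (i+1) - fishG n i) = 0 := by
    have h := Finset.sum_range_sub (fun j => fishG n (j+1)) (n+1)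
    have himg : Finset.Icc 1 (n+1) = Finset.image (fun j => j+1) (Finset.range (n+1)) := by
      ext a
      simp only [Finset.mem_Icc, Finset.mem_image, Finset.mem_range]
      constructor
      · rintro ⟨h1, h2⟩
        exact ⟨a-1, by omega, by omega⟩
      · rintro ⟨j, hj, rfl⟩
        omega
    rw [himg, Finset.sum_image (by intro a _ b _ hab; dsimp only at hab; omega)]
    rw [h, show n+1+1 = n+2 from rfl, show 0+1 = 1 from rfl, fishG_top n hn, fishG_one n hn]
    ring
  have hexp : ∑ i ∈ Finset.Icc 1 (n+1),
      (2*((n:ℚ)+2)*(2*(n:ℚ)+3) * fishT (n+1) i - 3*(3*(n:ℚ)+1)*(3*(n:ℚ)+2) * fishT n i)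
      = 2*((n:ℚ)+2)*(2*(n:ℚ)+3) * fishS (n+1)
        - 3*(3*(n:ℚ)+1)*(3*(n:ℚ)+2) * (fishS n + fishT n (n+1)) := by
    rw [Finset.sum_sub_distrib, ← Finset.mul_sum, ← Finset.mul_sum]
    have h2 : ∑ i ∈ Finset.Icc 1 (n+1), fishT n i = fishS n + fishT n (n+1) := by
      unfold fishS
      rw [Finset.sum_Icc_succ_top (by omega)]
    rw [h2]
    rfl
  rw [hexp, fishT_top] at hsum
  rw [htel] at hsum
  linarith [hsum]

private lemma R_step (n : ℕ) :
    2*((n:ℚ)+2)*(2*(n:ℚ)+3) * fishR (n+1) = 3*(3*(n:ℚ)+1)*(3*(n:ℚ)+2) * fishR n := by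
  have c1n : Nat.choose (3*n) n * (3*n+1) = Nat.choose (3*n+1) n * (2*n+1) := by
    have h := Nat.choose_mul_succ_eq (3*n) n
    simpa [show 3*n+1-n = 2*n+1 from by omega] using h
  have c2n : Nat.choose (3*n+1) n * (3*n+2) = Nat.choose (3*n+2) n * (2*n+2) := by
    have h := Nat.choose_mul_succ_eq (3*n+1) n
    simpa [show 3*n+1+1 = 3*n+2 from by omega, show 3*n+2-n = 2*n+2 from by omega] using h
  have c3n : (3*n+3) * Nat.choose (3*n+2) n = Nat.choose (3*n+3) (n+1) * (n+1) := by
    have h := Nat.add_one_mul_choose_eq (3*n+2) n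
    simpa [Nat.succ_eq_add_one, show 3*n+2+1 = 3*n+3 from by omega] using h
  have c1 : (Nat.choose (3*n) n : ℚ) * (3*(n:ℚ)+1)
      = (Nat.choose (3*n+1) n : ℚ) * (2*(n:ℚ)+1) := by exact_mod_cast c1n
  have c2 : (Nat.choose (3*n+1) n : ℚ) * (3*(n:ℚ)+2)
      = (Nat.choose (3*n+2) n : ℚ) * (2*(n:ℚ)+2) := by exact_mod_cast c2n
  have c3 : (3*(n:ℚ)+3) * (Nat.choose (3*n+2) n : ℚ)
      = (Nat.choose (3*n+3) (n+1) : ℚ) * ((n:ℚ)+1) := by exact_mod_cast c3n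
  have hn1 : ((n:ℚ)+1) ≠ 0 := by positivity
  have h2n1 : (2*(n:ℚ)+1) ≠ 0 := by positivity
  have h2n2 : (2*(n:ℚ)+2) ≠ 0 := by positivity
  have hn2 : ((n:ℚ)+2) ≠ 0 := by positivity
  have h2n3 : (2*(n:ℚ)+3) ≠ 0 := by positivity
  have e3 : (Nat.choose (3*n+3) (n+1) : ℚ) = 3 * (Nat.choose (3*n+2) n : ℚ) := by
    apply mul_right_cancel₀ hn1
    linear_combination -c3
  have e2 : (Nat.choose (3*n+2) n : ℚ)
      = (Nat.choose (3*n+1) n : ℚ) * (3*(n:ℚ)+2) / (2*(n:ℚ)+2) := by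
    rw [eq_div_iff h2n2]
    linear_combination -c2
  have e1 : (Nat.choose (3*n+1) n : ℚ)
      = (Nat.choose (3*n) n : ℚ) * (3*(n:ℚ)+1) / (2*(n:ℚ)+1) := by
    rw [eq_div_iff h2n1]
    linear_combination -c1
  unfold fishR
  rw [show 3*(n+1) = 3*n+3 from by omega]
  rw [e3, e2, e1]
  push_cast
  field_simp
  ring

private lemma fishS_eq (n : ℕ) (hn : 1 ≤ n) : fishS n = fishR n := by
  induction n with
  | zero => omega
  | succ k ih =>
    rcases Nat.lt_or_ge k 1 with hk | hk
    · -- k = 0, base case n = 1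
      interval_cases k
      show fishS 1 = fishR 1
      unfold fishS fishR
      rw [Finset.Icc_self, Finset.sum_singleton]
      unfold fishT
      norm_num [Nat.choose]
    · have hs := sum_step k hk
      have hr := R_step k
      rw [ih hk] at hs
      have hne : 2*((k:ℚ)+2)*(2*(k:ℚ)+3) ≠ 0 := by positivity
      have : 2*((k:ℚ)+2)*(2*(k:ℚ)+3) * fishS (k+1)
          = 2*((k:ℚ)+2)*(2*(k:ℚ)+3) * fishR (k+1) := by rw [hs, hr]
      exact mul_left_cancel₀ hne this

/-- Summing the number of fighting fish with `i` left and `j` right lower free edges over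
all pairs of positive integers `(i, j)` with `i + j = n + 1` gives the total number of
fighting fish of size `n + 1`. -/
theorem fighting_fish_total_count (n : ℕ) (hn : 1 ≤ n) :
    ∑ i ∈ Finset.Icc 1 n,
        (1 / ((i : ℚ) * ((n + 1 - i : ℕ) : ℚ))) *
          (Nat.choose (2*i + (n + 1 - i) - 2) ((n + 1 - i) - 1) : ℚ) *
          (Nat.choose (2*(n + 1 - i) + i - 2) (i - 1) : ℚ)
      = (2 / (((n : ℚ) + 1) * (2*(n : ℚ) + 1))) * (Nat.choose (3*n) n : ℚ) := by
  have h := fishS_eq n hn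
  unfold fishS fishT fishR at h
  exact h
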